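/- arXiv:1201.5232 — 4 statements merged into one kernel-verified Lean document; each statement's English description precedes it below -/
import Mathlib

section
/- Let u = (u_1,…,u_n) and v = (v_1,…,v_n) be vectors in ℂ^n, and set x = (|u_1|,…,|u_n|), y = (|v_1|,…,|v_n|) and z = (|u_1 − v_1|,…,|u_n − v_n|). Let f : [0,∞) → [0,∞) be a monotonically nondecreasing, subadditive function. Then for every k with 1 ≤ k ≤ n, ∑_{i=1}^k |f(x_i^↓) − f(y_i^↓)| ≤ ∑_{i=1}^k f(z_i^↓), where w^↓ denotes the rearrangement of the vector w in non-increasing order. -/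
/-- The rearrangement of a real vector in non-increasing order: `sortDesc w i` is the
`i`-th largest entry of `w`. -/
noncomputable def sortDesc {n : ℕ} (w : Fin n → ℝ) : Fin n → ℝ :=
  fun i => (w ∘ Tuple.sort w) i.rev

/-- Entrywise ≤ implies sorted (ascending) ≤ at every position. -/
lemma sorted_le_sorted {n : ℕ} {w w' : Fin n → ℝ} (h : ∀ j, w j ≤ w' j) (i : Fin n) :
    (w ∘ Tuple.sort w) i ≤ (w' ∘ Tuple.sort w') i := by
  set σ := Tuple.sort w with hσ
  set τ := Tuple.sort w' with hτ
  have hmw : Monotone (w ∘ σ) := Tuple.monotone_sort w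
  have hmw' : Monotone (w' ∘ τ) := Tuple.monotone_sort w'
  have key : ∃ j : Fin n, j ≤ i ∧ i ≤ σ.symm (τ j) := by
    by_contra hc
    push_neg at hc
    have hinj : ∀ a ∈ Finset.Iic i, ∀ b ∈ Finset.Iic i,
        σ.symm (τ a) = σ.symm (τ b) → a = b := by
      intro a _ b _ hab
      exact τ.injective (σ.symm.injective hab)
    have hmaps : ∀ a ∈ Finset.Iic i, σ.symm (τ a) ∈ Finset.Iio i := by
      intro a ha
      exact Finset.mem_Iio.2 (hc a (Finset.mem_Iic.1 ha))
    have := Finset.card_le_card_of_injOn _ hmaps hinj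
    simp at this
  obtain ⟨j, hji, hij⟩ := key
  calc (w ∘ σ) i ≤ (w ∘ σ) (σ.symm (τ j)) := hmw hij
    _ = w (τ j) := by simp
    _ ≤ w' (τ j) := h _
    _ ≤ (w' ∘ τ) i := hmw' hji

/-- Entrywise ≤ implies sortDesc ≤ at every position. -/
lemma sortDesc_le_sortDesc {n : ℕ} {w w' : Fin n → ℝ} (h : ∀ j, w j ≤ w' j) (i : Fin n) :
    sortDesc w i ≤ sortDesc w' i :=
  sorted_le_sorted h i.rev

/-- Applying a monotone function commutes with descending sort (on nonneg vectors). -/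
lemma sortDesc_comp {n : ℕ} {w : Fin n → ℝ} (hw : ∀ j, 0 ≤ w j) {f : ℝ → ℝ}
    (hf : MonotoneOn f (Set.Ici 0)) (i : Fin n) :
    sortDesc (fun j => f (w j)) i = f (sortDesc w i) := by
  have hmono : Monotone ((fun j => f (w j)) ∘ Tuple.sort w) := by
    intro a b hab
    exact hf (hw _) (hw _) (Tuple.monotone_sort w hab)
  have := Tuple.comp_sort_eq_comp_iff_monotone.mpr hmono
  show ((fun j => f (w j)) ∘ Tuple.sort (fun j => f (w j))) i.rev = _
  rw [← this]
  rfl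

/-- The set of the `k` smallest positions (for descending sort these index the top `k`). -/
lemma mem_image_rev_filter {n k : ℕ} (hkn : k ≤ n) (i : Fin n) :
    i ∈ (Finset.univ.filter (fun i : Fin n => (i : ℕ) < k)).image Fin.rev ↔
      n - k ≤ (i : ℕ) := by
  simp only [Finset.mem_image, Finset.mem_filter, Finset.mem_univ, true_and]
  constructor
  · rintro ⟨a, ha, rfl⟩
    have := a.isLt
    simp only [Fin.val_rev]
    omega
  · intro hi
    refine ⟨i.rev, ?_, Fin.rev_rev i⟩
    have := i.isLt
    simp only [Fin.val_rev]
    omega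

lemma card_filter_lt {n k : ℕ} (hkn : k ≤ n) :
    (Finset.univ.filter (fun i : Fin n => (i : ℕ) < k)).card = k := by
  have : (Finset.univ.filter (fun i : Fin n => (i : ℕ) < k)) =
      Finset.map (Fin.castLEEmb hkn) Finset.univ := by
    ext i
    simp only [Finset.mem_filter, Finset.mem_univ, true_and, Finset.mem_map,
      Fin.castLEEmb_apply]
    constructor
    · intro hi
      exact ⟨⟨i, hi⟩, rfl⟩
    · rintro ⟨j, rfl⟩
      exact j.isLt
  rw [this]
  simp

/-- Top-`k` sum of a monotone function dominates the sum over any `k`-subset. -/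
lemma sum_le_top {n k : ℕ} (hkn : k ≤ n) {g : Fin n → ℝ} (hg : Monotone g)
    (A : Finset (Fin n)) (hA : A.card = k) :
    ∑ a ∈ A, g a ≤
      ∑ i ∈ (Finset.univ.filter (fun i : Fin n => (i : ℕ) < k)).image Fin.rev, g i := by
  rcases Nat.eq_zero_or_pos k with rfl | hk
  · simp only [Finset.card_eq_zero] at hA
    subst hA
    simp
  set T := (Finset.univ.filter (fun i : Fin n => (i : ℕ) < k)).image Fin.rev with hT
  have hTmem : ∀ i : Fin n, i ∈ T ↔ n - k ≤ (i : ℕ) := mem_image_rev_filter hkn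
  have hTcard : T.card = k := by
    rw [hT, Finset.card_image_of_injective _ Fin.rev_injective, card_filter_lt hkn]
  have hn : 0 < n := lt_of_lt_of_le hk hkn
  set c : Fin n := ⟨n - k, by omega⟩ with hc
  have h1 : ∑ a ∈ A \ T, g a ≤ (A \ T).card • g c := by
    apply Finset.sum_le_card_nsmul
    intro x hx
    obtain ⟨hxA, hxT⟩ := Finset.mem_sdiff.mp hx
    have : ¬ (n - k ≤ (x : ℕ)) := fun hcon => hxT ((hTmem x).mpr hcon)
    exact hg (by simp only [Fin.le_def, hc]; omega)
  have h2 : (T \ A).card • g c ≤ ∑ a ∈ T \ A, g a := by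
    apply Finset.card_nsmul_le_sum
    intro x hx
    obtain ⟨hxT, hxA⟩ := Finset.mem_sdiff.mp hx
    have := (hTmem x).mp hxT
    exact hg (by simp only [Fin.le_def, hc]; omega)
  have hcard_eq : (A \ T).card = (T \ A).card := by
    have h1 := Finset.card_sdiff_add_card_inter A T
    have h2 := Finset.card_sdiff_add_card_inter T A
    rw [Finset.inter_comm] at h2
    omega
  have hsplitA : ∑ a ∈ A ∩ T, g a + ∑ a ∈ A \ T, g a = ∑ a ∈ A, g a :=
    Finset.sum_inter_add_sum_sdiff A T g
  have hsplitT : ∑ a ∈ T ∩ A, g a + ∑ a ∈ T \ A, g a = ∑ a ∈ T, g a :=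
    Finset.sum_inter_add_sum_sdiff T A g
  rw [Finset.inter_comm] at hsplitT
  rw [hcard_eq] at h1
  linarith


lemma sum_sortDesc_eq {n k : ℕ} (w : Fin n → ℝ) :
    ∑ i ∈ Finset.univ.filter (fun i : Fin n => (i : ℕ) < k), sortDesc w i =
      ∑ i ∈ (Finset.univ.filter (fun i : Fin n => (i : ℕ) < k)).image Fin.rev,
        (w ∘ Tuple.sort w) i := by
  rw [Finset.sum_image (fun a _ b _ h => Fin.rev_injective h)]
  rfl

/-- Sum over any `k`-subset is at most the top-`k` sum of sorted values. -/
lemma sum_le_sum_sortDesc {n k : ℕ} (hkn : k ≤ n) (w : Fin n → ℝ)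
    (S : Finset (Fin n)) (hS : S.card = k) :
    ∑ j ∈ S, w j ≤
      ∑ i ∈ Finset.univ.filter (fun i : Fin n => (i : ℕ) < k), sortDesc w i := by
  rw [sum_sortDesc_eq]
  set σ := Tuple.sort w
  have h1 : ∑ j ∈ S, w j = ∑ a ∈ S.image σ.symm, (w ∘ σ) a := by
    rw [Finset.sum_image (fun a _ b _ h => σ.symm.injective h)]
    simp
  rw [h1]
  exact sum_le_top hkn (Tuple.monotone_sort w) _
    (by rw [Finset.card_image_of_injective _ σ.symm.injective, hS])

/-- The top-`k` sum of sorted values is attained by some `k`-subset. -/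
lemma sum_sortDesc_attained {n k : ℕ} (hkn : k ≤ n) (w : Fin n → ℝ) :
    ∃ S : Finset (Fin n), S.card = k ∧
      ∑ i ∈ Finset.univ.filter (fun i : Fin n => (i : ℕ) < k), sortDesc w i =
        ∑ j ∈ S, w j := by
  set σ := Tuple.sort w
  set T := (Finset.univ.filter (fun i : Fin n => (i : ℕ) < k)).image Fin.rev with hT
  refine ⟨T.image σ, ?_, ?_⟩
  · rw [Finset.card_image_of_injective _ σ.injective, hT,
      Finset.card_image_of_injective _ Fin.rev_injective, card_filter_lt hkn]
  · rw [sum_sortDesc_eq, Finset.sum_image (fun a _ b _ h => σ.injective h)]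
    rfl

/-- For vectors `u, v ∈ ℂⁿ`, let `x = |u|`, `y = |v|`, `z = |u − v|` entrywise.  If
`f : [0,∞) → [0,∞)` is nondecreasing and subadditive, then for every `1 ≤ k ≤ n`,
`∑_{i<k} |f(x_i^↓) − f(y_i^↓)| ≤ ∑_{i<k} f(z_i^↓)`. -/
theorem abs_diff_sorted_subadditive
    {n : ℕ} (u v : Fin n → ℂ) (f : ℝ → ℝ)
    (hf_mono : MonotoneOn f (Set.Ici 0))
    (hf_subadd : ∀ x ∈ Set.Ici (0 : ℝ), ∀ y ∈ Set.Ici (0 : ℝ), f (x + y) ≤ f x + f y)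
    (hf_nonneg : ∀ x ∈ Set.Ici (0 : ℝ), 0 ≤ f x)
    (k : ℕ) (hk1 : 1 ≤ k) (hkn : k ≤ n) :
    ∑ i ∈ Finset.univ.filter (fun i : Fin n => (i : ℕ) < k),
        |f (sortDesc (fun j => ‖u j‖) i) -
          f (sortDesc (fun j => ‖v j‖) i)| ≤
      ∑ i ∈ Finset.univ.filter (fun i : Fin n => (i : ℕ) < k),
        f (sortDesc (fun j => ‖u j - v j‖) i) := by
  classical
  set F := Finset.univ.filter (fun i : Fin n => (i : ℕ) < k) with hF
  set x : Fin n → ℝ := fun j => ‖u j‖ with hxdef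
  set y : Fin n → ℝ := fun j => ‖v j‖ with hydef
  set z : Fin n → ℝ := fun j => ‖u j - v j‖ with hzdef
  set m : Fin n → ℝ := fun j => min (x j) (y j) with hmdef
  set M : Fin n → ℝ := fun j => max (x j) (y j) with hMdef
  have hx0 : ∀ j, 0 ≤ x j := fun j => norm_nonneg _
  have hy0 : ∀ j, 0 ≤ y j := fun j => norm_nonneg _
  have hz0 : ∀ j, 0 ≤ z j := fun j => norm_nonneg _
  have hm0 : ∀ j, 0 ≤ m j := fun j => le_min (hx0 j) (hy0 j)
  have hM0 : ∀ j, 0 ≤ M j := fun j => (hx0 j).trans (le_max_left _ _)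
  have hsd0 : ∀ (w : Fin n → ℝ), (∀ j, 0 ≤ w j) → ∀ i : Fin n, 0 ≤ sortDesc w i :=
    fun w hw i => hw _
  -- pointwise bound on the summands
  have hxy : ∀ j, |x j - y j| ≤ z j := by
    intro j
    exact abs_norm_sub_norm_le (u j) (v j)
  have hMm : ∀ j, M j = m j + |x j - y j| := by
    intro j
    have := max_sub_min_eq_abs (x j) (y j)
    rw [abs_sub_comm] at this
    simp only [hMdef, hmdef]
    linarith
  have hMz : ∀ j, M j ≤ m j + z j := by
    intro j
    rw [hMm j]
    exact add_le_add (le_refl (m j)) (hxy j)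
  -- sorted comparisons
  have hmx : ∀ i, sortDesc m i ≤ sortDesc x i :=
    sortDesc_le_sortDesc (fun j => min_le_left _ _)
  have hmy : ∀ i, sortDesc m i ≤ sortDesc y i :=
    sortDesc_le_sortDesc (fun j => min_le_right _ _)
  have hxM : ∀ i, sortDesc x i ≤ sortDesc M i :=
    sortDesc_le_sortDesc (fun j => le_max_left _ _)
  have hyM : ∀ i, sortDesc y i ≤ sortDesc M i :=
    sortDesc_le_sortDesc (fun j => le_max_right _ _)
  have hpt : ∀ i ∈ F, |f (sortDesc x i) - f (sortDesc y i)| ≤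
      f (sortDesc M i) - f (sortDesc m i) := by
    intro i _
    have h1 : f (sortDesc x i) ≤ f (sortDesc M i) :=
      hf_mono (hsd0 x hx0 i) (hsd0 M hM0 i) (hxM i)
    have h2 : f (sortDesc y i) ≤ f (sortDesc M i) :=
      hf_mono (hsd0 y hy0 i) (hsd0 M hM0 i) (hyM i)
    have h3 : f (sortDesc m i) ≤ f (sortDesc x i) :=
      hf_mono (hsd0 m hm0 i) (hsd0 x hx0 i) (hmx i)
    have h4 : f (sortDesc m i) ≤ f (sortDesc y i) :=
      hf_mono (hsd0 m hm0 i) (hsd0 y hy0 i) (hmy i)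
    rw [abs_sub_le_iff]
    constructor <;> linarith
  have step1 : ∑ i ∈ F, |f (sortDesc x i) - f (sortDesc y i)| ≤
      ∑ i ∈ F, (f (sortDesc M i) - f (sortDesc m i)) :=
    Finset.sum_le_sum hpt
  -- commute f with sorting
  have hcM : ∀ i ∈ F, f (sortDesc M i) = sortDesc (fun j => f (M j)) i :=
    fun i _ => (sortDesc_comp hM0 hf_mono i).symm
  have hcm : ∀ i ∈ F, sortDesc (fun j => f (m j)) i = f (sortDesc m i) :=
    fun i _ => sortDesc_comp hm0 hf_mono i
  have hcz : ∀ i ∈ F, sortDesc (fun j => f (z j)) i = f (sortDesc z i) :=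
    fun i _ => sortDesc_comp hz0 hf_mono i
  obtain ⟨S, hScard, hSeq⟩ := sum_sortDesc_attained hkn (fun j => f (M j))
  have step2 : ∑ i ∈ F, f (sortDesc M i) = ∑ j ∈ S, f (M j) := by
    rw [Finset.sum_congr rfl hcM]
    exact hSeq
  have step3 : ∀ j, f (M j) ≤ f (m j) + f (z j) := by
    intro j
    have h1 : f (M j) ≤ f (m j + z j) :=
      hf_mono (hM0 j) (add_nonneg (hm0 j) (hz0 j)) (hMz j)
    exact h1.trans (hf_subadd _ (hm0 j) _ (hz0 j))
  have step4 : ∑ j ∈ S, f (M j) ≤ ∑ j ∈ S, f (m j) + ∑ j ∈ S, f (z j) := by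
    rw [← Finset.sum_add_distrib]
    exact Finset.sum_le_sum (fun j _ => step3 j)
  have step5 : ∑ j ∈ S, f (m j) ≤ ∑ i ∈ F, f (sortDesc m i) := by
    calc ∑ j ∈ S, f (m j) ≤ ∑ i ∈ F, sortDesc (fun j => f (m j)) i :=
          sum_le_sum_sortDesc hkn _ S hScard
      _ = ∑ i ∈ F, f (sortDesc m i) := Finset.sum_congr rfl hcm
  have step6 : ∑ j ∈ S, f (z j) ≤ ∑ i ∈ F, f (sortDesc z i) := by
    calc ∑ j ∈ S, f (z j) ≤ ∑ i ∈ F, sortDesc (fun j => f (z j)) i :=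
          sum_le_sum_sortDesc hkn _ S hScard
      _ = ∑ i ∈ F, f (sortDesc z i) := Finset.sum_congr rfl hcz
  have hsplit : ∑ i ∈ F, (f (sortDesc M i) - f (sortDesc m i)) =
      ∑ i ∈ F, f (sortDesc M i) - ∑ i ∈ F, f (sortDesc m i) :=
    Finset.sum_sub_distrib _ _
  linarith
end

section
/- Let X and Y be n×n positive semidefinite complex matrices. Then the trace norm of their commutator satisfies ‖XY − YX‖_1 ≤ tr(X) · tr(Y). -/
open scoped ComplexOrder

/-- The trace norm `‖Z‖₁ = tr ((Zᴴ Z)^{1/2})` of a square complex matrix, i.e. the sum of its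
singular values. -/
noncomputable def traceNorm {n : ℕ} (Z : Matrix (Fin n) (Fin n) ℂ) : ℝ :=
  ((Matrix.posSemidef_conjTranspose_mul_self Z).1.eigenvectorUnitary.1 *
    Matrix.diagonal ((fun x : ℝ => (x : ℂ)) ∘ Real.sqrt ∘ (Matrix.posSemidef_conjTranspose_mul_self Z).1.eigenvalues) *
    (star (Matrix.posSemidef_conjTranspose_mul_self Z).1.eigenvectorUnitary : Matrix (Fin n) (Fin n) ℂ)).trace.re

open Matrix Complex Finset

section helpers

variable {n : ℕ}

lemma dot_conj (Q B : Matrix (Fin n) (Fin n) ℂ) (v u : Fin n → ℂ) :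
    star v ⬝ᵥ ((Q * B * Qᴴ) *ᵥ u) = star (Qᴴ *ᵥ v) ⬝ᵥ (B *ᵥ (Qᴴ *ᵥ u)) := by
  rw [star_mulVec, conjTranspose_conjTranspose, ← mulVec_mulVec, ← mulVec_mulVec,
    dotProduct_mulVec]

lemma dot_unitary {Q : Matrix (Fin n) (Fin n) ℂ} (hQ : Qᴴ * Q = 1) (v u : Fin n → ℂ) :
    star (Q *ᵥ v) ⬝ᵥ (Q *ᵥ u) = star v ⬝ᵥ u := by
  rw [star_mulVec, dotProduct_mulVec, vecMul_vecMul, hQ, vecMul_one]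

lemma dot_diag (d : Fin n → ℝ) (w x : Fin n → ℂ) :
    star w ⬝ᵥ ((Matrix.diagonal (fun j => (d j : ℂ))) *ᵥ x)
      = ∑ j, (d j : ℂ) * ((starRingEnd ℂ) (w j) * x j) := by
  simp [dotProduct, Matrix.mulVec_diagonal]
  exact Finset.sum_congr rfl fun j _ => by ring

lemma dot_single (v : Fin n → ℂ) (k : Fin n) :
    star (Pi.single k 1) ⬝ᵥ v = v k := by
  simp [dotProduct, Pi.single_apply, apply_ite]

lemma sum_normSq_eq_one {Q : Matrix (Fin n) (Fin n) ℂ} (hQ : Qᴴ * Q = 1)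
    {v : Fin n → ℂ} (hv : star v ⬝ᵥ v = 1) :
    ∑ j, Complex.normSq ((Q *ᵥ v) j) = 1 := by
  have h := dot_unitary hQ v v
  rw [hv] at h
  have : star (Q *ᵥ v) ⬝ᵥ (Q *ᵥ v) = ((∑ j, Complex.normSq ((Q *ᵥ v) j) : ℝ) : ℂ) := by
    simp [dotProduct, Complex.normSq_eq_conj_mul_self]
  rw [this] at h
  exact_mod_cast h

lemma trace_hermitian {Y : Matrix (Fin n) (Fin n) ℂ} (hY : Y.IsHermitian) :
    Y.trace = ((∑ j, hY.eigenvalues j : ℝ) : ℂ) := by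
  conv_lhs => rw [hY.spectral_theorem, Unitary.conjStarAlgAut_apply]
  rw [trace_mul_cycle,
    show (star (hY.eigenvectorUnitary : Matrix (Fin n) (Fin n) ℂ)) *
      (hY.eigenvectorUnitary : Matrix (Fin n) (Fin n) ℂ) = 1 from
    Matrix.mem_unitaryGroup_iff'.mp hY.eigenvectorUnitary.2, one_mul, trace_diagonal]
  push_cast
  rfl

lemma rclike_ofReal_comp (e : Fin n → ℝ) :
    (RCLike.ofReal ∘ e : Fin n → ℂ) = fun j => ((e j : ℝ) : ℂ) := rfl

lemma psd_form_le_trace {Y : Matrix (Fin n) (Fin n) ℂ} (hY : Y.PosSemidef)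
    {v : Fin n → ℂ} (hv : star v ⬝ᵥ v = 1) :
    (star v ⬝ᵥ (Y *ᵥ v)).re ≤ Y.trace.re := by
  classical
  set Q : Matrix (Fin n) (Fin n) ℂ := (hY.1.eigenvectorUnitary : Matrix (Fin n) (Fin n) ℂ) with hQdef
  have hQ1 : Qᴴ * Q = 1 := by
    rw [← star_eq_conjTranspose]
    exact Matrix.mem_unitaryGroup_iff'.mp hY.1.eigenvectorUnitary.2
  have hQ2 : Q * Qᴴ = 1 := by
    rw [← star_eq_conjTranspose]
    exact Matrix.mem_unitaryGroup_iff.mp hY.1.eigenvectorUnitary.2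
  set w := Qᴴ *ᵥ v with hw
  have hform : star v ⬝ᵥ (Y *ᵥ v)
      = ∑ j, (hY.1.eigenvalues j : ℂ) * ((starRingEnd ℂ) (w j) * w j) := by
    conv_lhs => rw [hY.1.spectral_theorem, Unitary.conjStarAlgAut_apply]
    rw [star_eq_conjTranspose, rclike_ofReal_comp, dot_conj, dot_diag]
  have hsum1 : ∑ j, Complex.normSq (w j) = 1 := by
    have hQ1' : (Qᴴ)ᴴ * Qᴴ = 1 := by rwa [conjTranspose_conjTranspose]
    exact sum_normSq_eq_one hQ1' hv
  have hre : (star v ⬝ᵥ (Y *ᵥ v)).re = ∑ j, hY.1.eigenvalues j * Complex.normSq (w j) := by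
    rw [hform]
    simp [Complex.normSq_eq_conj_mul_self, Complex.normSq_apply]
  rw [hre, trace_hermitian hY.1]
  simp only [Complex.ofReal_re]
  refine Finset.sum_le_sum fun j _ => ?_
  refine mul_le_of_le_one_right (hY.eigenvalues_nonneg j) ?_
  calc Complex.normSq (w j) ≤ ∑ i, Complex.normSq (w i) :=
        Finset.single_le_sum (fun i _ => Complex.normSq_nonneg _) (Finset.mem_univ j)
    _ = 1 := hsum1

lemma herm_bilin_bound {A : Matrix (Fin n) (Fin n) ℂ} (hA : A.IsHermitian)
    {c : ℝ} (hc : 0 ≤ c) (hev : ∀ j, |hA.eigenvalues j| ≤ c)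
    {v u : Fin n → ℂ} (hv : star v ⬝ᵥ v = 1) (hu : star u ⬝ᵥ u = 1) :
    ‖star v ⬝ᵥ (A *ᵥ u)‖ ≤ c := by
  classical
  set Q : Matrix (Fin n) (Fin n) ℂ := (hA.eigenvectorUnitary : Matrix (Fin n) (Fin n) ℂ)
  have hQ1 : Qᴴ * Q = 1 := by
    rw [← star_eq_conjTranspose]
    exact Matrix.mem_unitaryGroup_iff'.mp hA.eigenvectorUnitary.2
  set a := Qᴴ *ᵥ v with ha
  set b := Qᴴ *ᵥ u with hb
  have hform : star v ⬝ᵥ (A *ᵥ u)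
      = ∑ j, (hA.eigenvalues j : ℂ) * ((starRingEnd ℂ) (a j) * b j) := by
    conv_lhs => rw [hA.spectral_theorem, Unitary.conjStarAlgAut_apply]
    rw [star_eq_conjTranspose, rclike_ofReal_comp, dot_conj, dot_diag]
  have hQ1' : (Qᴴ)ᴴ * Qᴴ = 1 := by
    rw [conjTranspose_conjTranspose, ← star_eq_conjTranspose]
    exact Matrix.mem_unitaryGroup_iff.mp hA.eigenvectorUnitary.2
  have hsa : ∑ j, Complex.normSq (a j) = 1 := sum_normSq_eq_one hQ1' hv
  have hsb : ∑ j, Complex.normSq (b j) = 1 := sum_normSq_eq_one hQ1' hu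
  calc ‖star v ⬝ᵥ (A *ᵥ u)‖
      ≤ ∑ j, ‖(hA.eigenvalues j : ℂ) * ((starRingEnd ℂ) (a j) * b j)‖ := by
        rw [hform]; exact norm_sum_le _ _
    _ = ∑ j, |hA.eigenvalues j| * (‖a j‖ * ‖b j‖) := by
        simp [norm_mul, Complex.norm_real]
    _ ≤ ∑ j, c * (‖a j‖ * ‖b j‖) := by
        refine Finset.sum_le_sum fun j _ => ?_
        exact mul_le_mul_of_nonneg_right (hev j)
          (mul_nonneg (norm_nonneg _) (norm_nonneg _))
    _ = c * ∑ j, ‖a j‖ * ‖b j‖ := by rw [Finset.mul_sum]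
    _ ≤ c * 1 := by
        refine mul_le_mul_of_nonneg_left ?_ hc
        have hCS := Finset.sum_mul_sq_le_sq_mul_sq Finset.univ
          (fun j => ‖a j‖) (fun j => ‖b j‖)
        have h1 : ∑ j, ‖a j‖ ^ 2 = 1 := by
          simpa [Complex.sq_norm] using hsa
        have h2 : ∑ j, ‖b j‖ ^ 2 = 1 := by
          simpa [Complex.sq_norm] using hsb
        rw [h1, h2, mul_one] at hCS
        nlinarith [hCS, Finset.sum_nonneg (fun j (_ : j ∈ Finset.univ) =>
          mul_nonneg (norm_nonneg (a j)) (norm_nonneg (b j)))]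
    _ = c := mul_one c

lemma trace_psd_re_nonneg {Y : Matrix (Fin n) (Fin n) ℂ} (hY : Y.PosSemidef) :
    0 ≤ Y.trace.re := by
  rw [trace_hermitian hY.1]
  simp only [Complex.ofReal_re]
  exact Finset.sum_nonneg fun j _ => hY.eigenvalues_nonneg j

lemma single_unit (k : Fin n) : star (Pi.single k 1 : Fin n → ℂ) ⬝ᵥ Pi.single k 1 = 1 := by
  rw [dot_single]; simp

lemma diag_entry_eq_dot (M : Matrix (Fin n) (Fin n) ℂ) (k : Fin n) :
    M k k = star (Pi.single k 1 : Fin n → ℂ) ⬝ᵥ (M *ᵥ Pi.single k 1) := by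
  rw [dot_single]
  simp [Matrix.mulVec_single]

lemma trace_diag_mul (d : Fin n → ℂ) (G : Matrix (Fin n) (Fin n) ℂ) :
    (Matrix.diagonal d * G).trace = ∑ k, d k * G k k := by
  simp [Matrix.trace, Matrix.diag, Matrix.mul_apply, Matrix.diagonal_apply, ite_mul]

lemma commut_form_bound {Y U : Matrix (Fin n) (Fin n) ℂ} (hY : Y.PosSemidef)
    (hU1 : Uᴴ * U = 1) (hU2 : U * Uᴴ = 1)
    {v : Fin n → ℂ} (hv : star v ⬝ᵥ v = 1) :
    ‖star v ⬝ᵥ ((Y * U - U * Y) *ᵥ v)‖ ≤ Y.trace.re := by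
  classical
  set c := Y.trace.re with hcdef
  have hc : 0 ≤ c := trace_psd_re_nonneg hY
  set A : Matrix (Fin n) (Fin n) ℂ := Y - U * Y * Uᴴ with hA
  have hAH : A.IsHermitian := by
    have : Aᴴ = A := by
      rw [hA, conjTranspose_sub, conjTranspose_mul, conjTranspose_mul,
        conjTranspose_conjTranspose, hY.1, ← mul_assoc]
    exact this
  -- eigenvalue bound for A
  have hev : ∀ j, |hAH.eigenvalues j| ≤ c := by
    intro j
    have hp := hAH.eigenvalues_eq j
    set p : Fin n → ℂ := ⇑(hAH.eigenvectorBasis j) with hpdef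
    have hpcol : (hAH.eigenvectorUnitary : Matrix (Fin n) (Fin n) ℂ) *ᵥ Pi.single j 1 = p :=
      hAH.eigenvectorUnitary_mulVec j
    have hQ1 : (hAH.eigenvectorUnitary : Matrix (Fin n) (Fin n) ℂ)ᴴ *
        (hAH.eigenvectorUnitary : Matrix (Fin n) (Fin n) ℂ) = 1 := by
      rw [← star_eq_conjTranspose]
      exact Matrix.mem_unitaryGroup_iff'.mp hAH.eigenvectorUnitary.2
    have hpu : star p ⬝ᵥ p = 1 := by
      rw [← hpcol, dot_unitary hQ1]; exact single_unit j
    set q : Fin n → ℂ := Uᴴ *ᵥ p with hqdef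
    have hqu : star q ⬝ᵥ q = 1 := by
      have hU2' : (Uᴴ)ᴴ * Uᴴ = 1 := by rwa [conjTranspose_conjTranspose]
      rw [hqdef, dot_unitary hU2' p p, hpu]
    have hsplit : hAH.eigenvalues j
        = (star p ⬝ᵥ (Y *ᵥ p)).re - (star q ⬝ᵥ (Y *ᵥ q)).re := by
      rw [hp]
      have : star p ⬝ᵥ (A *ᵥ p)
          = star p ⬝ᵥ (Y *ᵥ p) - star q ⬝ᵥ (Y *ᵥ q) := by
        rw [hA, sub_mulVec, dotProduct_sub, dot_conj U Y p p]
      rw [this]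
      simp [RCLike.re_to_complex]
    have h1 : 0 ≤ (star p ⬝ᵥ (Y *ᵥ p)).re := hY.re_dotProduct_nonneg p
    have h2 : 0 ≤ (star q ⬝ᵥ (Y *ᵥ q)).re := hY.re_dotProduct_nonneg q
    have h3 : (star p ⬝ᵥ (Y *ᵥ p)).re ≤ c := psd_form_le_trace hY hpu
    have h4 : (star q ⬝ᵥ (Y *ᵥ q)).re ≤ c := psd_form_le_trace hY hqu
    rw [hsplit]
    rw [abs_le]
    constructor <;> linarith
  -- rewrite Y*U - U*Y = A * U
  have hCAU : Y * U - U * Y = A * U := by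
    rw [hA, sub_mul, mul_assoc (U * Y) Uᴴ U, hU1, mul_one]
  rw [hCAU, ← mulVec_mulVec]
  have huu : star (U *ᵥ v) ⬝ᵥ (U *ᵥ v) = 1 := by rw [dot_unitary hU1, hv]
  exact herm_bilin_bound hAH hc hev hv huu

lemma trace_commut_bound {X Y U : Matrix (Fin n) (Fin n) ℂ}
    (hX : X.PosSemidef) (hY : Y.PosSemidef)
    (hU1 : Uᴴ * U = 1) (hU2 : U * Uᴴ = 1) :
    ‖(X * (Y * U - U * Y)).trace‖ ≤ X.trace.re * Y.trace.re := by
  classical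
  set C : Matrix (Fin n) (Fin n) ℂ := Y * U - U * Y with hC
  set V : Matrix (Fin n) (Fin n) ℂ := (hX.1.eigenvectorUnitary : Matrix (Fin n) (Fin n) ℂ)
    with hVdef
  have hV1 : Vᴴ * V = 1 := by
    rw [← star_eq_conjTranspose]
    exact Matrix.mem_unitaryGroup_iff'.mp hX.1.eigenvectorUnitary.2
  set μ := hX.1.eigenvalues with hμ
  have hXspec : X = V * Matrix.diagonal (fun j => ((μ j : ℝ) : ℂ)) * Vᴴ := by
    conv_lhs => rw [hX.1.spectral_theorem, Unitary.conjStarAlgAut_apply]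
    rw [star_eq_conjTranspose, rclike_ofReal_comp]
  have htr : (X * C).trace
      = ∑ k, (μ k : ℂ) * ((Vᴴ * C * V) k k) := by
    conv_lhs => rw [hXspec]
    rw [mul_assoc (V * Matrix.diagonal (fun j => ((μ j : ℝ) : ℂ))) Vᴴ C,
      Matrix.trace_mul_comm, ← mul_assoc, Matrix.trace_mul_comm, trace_diag_mul]
  have hentry : ∀ k, (Vᴴ * C * V) k k
      = star (V *ᵥ Pi.single k 1) ⬝ᵥ (C *ᵥ (V *ᵥ Pi.single k 1)) := by
    intro k
    rw [diag_entry_eq_dot (Vᴴ * C * V) k]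
    have : Vᴴ * C * V = Vᴴ * C * (Vᴴ)ᴴ := by rw [conjTranspose_conjTranspose]
    rw [this, dot_conj, conjTranspose_conjTranspose]
  have hcol : ∀ k, star (V *ᵥ (Pi.single k 1 : Fin n → ℂ)) ⬝ᵥ (V *ᵥ Pi.single k 1) = 1 := by
    intro k
    rw [dot_unitary hV1]; exact single_unit k
  calc ‖(X * C).trace‖
      ≤ ∑ k, ‖(μ k : ℂ) * ((Vᴴ * C * V) k k)‖ := by
        rw [htr]; exact norm_sum_le _ _
    _ = ∑ k, μ k * ‖(Vᴴ * C * V) k k‖ := by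
        refine Finset.sum_congr rfl fun k _ => ?_
        rw [norm_mul, Complex.norm_real, Real.norm_eq_abs, _root_.abs_of_nonneg (hX.eigenvalues_nonneg k)]
    _ ≤ ∑ k, μ k * Y.trace.re := by
        refine Finset.sum_le_sum fun k _ => ?_
        refine mul_le_mul_of_nonneg_left ?_ (hX.eigenvalues_nonneg k)
        rw [hentry k]
        exact commut_form_bound hY hU1 hU2 (hcol k)
    _ = X.trace.re * Y.trace.re := by
        rw [← Finset.sum_mul, trace_hermitian hX.1]
        simp
        exact Or.inl rfl

open scoped MatrixOrder in
lemma cfc_sqrt_eq' {A B : Matrix (Fin n) (Fin n) ℂ} (hA : A.PosSemidef) (hB : B.PosSemidef)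
    (h : B ^ 2 = A) :
    hA.1.eigenvectorUnitary.1 *
      Matrix.diagonal ((fun x : ℝ => (x : ℂ)) ∘ Real.sqrt ∘ hA.1.eigenvalues) *
      (star hA.1.eigenvectorUnitary : Matrix (Fin n) (Fin n) ℂ) = B := by
  have e1 : hA.1.cfc Real.sqrt = hA.1.eigenvectorUnitary.1 *
      Matrix.diagonal ((fun x : ℝ => (x : ℂ)) ∘ Real.sqrt ∘ hA.1.eigenvalues) *
      (star hA.1.eigenvectorUnitary : Matrix (Fin n) (Fin n) ℂ) := rfl
  rw [← e1, ← hA.1.cfc_eq, ← cfcₙ_eq_cfc (f := Real.sqrt) (a := A),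
    ← CFC.sqrt_eq_real_sqrt A hA.nonneg]
  exact CFC.sqrt_unique (by rw [← h, pow_two]) hB.nonneg

end helpers

/-- For positive semidefinite matrices `X`, `Y`, the trace norm of the commutator satisfies
`‖XY − YX‖₁ ≤ tr X · tr Y`. -/
theorem traceNorm_commutator_le
    {n : ℕ} (X Y : Matrix (Fin n) (Fin n) ℂ)
    (hX : X.PosSemidef) (hY : Y.PosSemidef) :
    traceNorm (X * Y - Y * X) ≤ X.trace.re * Y.trace.re := by
  classical
  set Z : Matrix (Fin n) (Fin n) ℂ := X * Y - Y * X with hZ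
  have hZct : Zᴴ = -Z := by
    rw [hZ, conjTranspose_sub, conjTranspose_mul, conjTranspose_mul, hX.1, hY.1, neg_sub]
  set H : Matrix (Fin n) (Fin n) ℂ := Complex.I • Z with hH
  have hHH : H.IsHermitian := by
    show Hᴴ = H
    rw [hH, Matrix.conjTranspose_smul, hZct, Complex.star_def, Complex.conj_I, neg_smul,
      smul_neg, neg_neg]
  set W : Matrix (Fin n) (Fin n) ℂ := (hHH.eigenvectorUnitary : Matrix (Fin n) (Fin n) ℂ)
    with hW
  have hW1 : Wᴴ * W = 1 := by
    rw [← star_eq_conjTranspose]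
    exact Matrix.mem_unitaryGroup_iff'.mp hHH.eigenvectorUnitary.2
  have hW2 : W * Wᴴ = 1 := by
    rw [← star_eq_conjTranspose]
    exact Matrix.mem_unitaryGroup_iff.mp hHH.eigenvectorUnitary.2
  have hWW : ∀ M : Matrix (Fin n) (Fin n) ℂ, Wᴴ * (W * M) = M := fun M => by
    rw [← mul_assoc, hW1, one_mul]
  set lam := hHH.eigenvalues with hlam
  have hHspec : H = W * Matrix.diagonal (fun j => ((lam j : ℝ) : ℂ)) * Wᴴ := by
    conv_lhs => rw [hHH.spectral_theorem, Unitary.conjStarAlgAut_apply]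
    rw [star_eq_conjTranspose, rclike_ofReal_comp]
  have hHHmul : Zᴴ * Z = H * H := by
    rw [hZct, hH, Matrix.smul_mul, Matrix.mul_smul, smul_smul, Complex.I_mul_I, neg_mul,
      neg_smul, one_smul]
  -- the matrix B = W |Λ| Wᴴ is the square root of ZᴴZ
  set B : Matrix (Fin n) (Fin n) ℂ :=
    W * Matrix.diagonal (fun j => ((|lam j| : ℝ) : ℂ)) * Wᴴ with hB
  have hBpsd : B.PosSemidef := by
    have hd : (Matrix.diagonal (fun j => ((|lam j| : ℝ) : ℂ))).PosSemidef := by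
      refine Matrix.posSemidef_diagonal_iff.mpr fun j => ?_
      exact_mod_cast Complex.zero_le_real.mpr (abs_nonneg _)
    exact hd.mul_mul_conjTranspose_same W
  have habs2 : (Matrix.diagonal fun j => ((|lam j| : ℝ) : ℂ))
      * (Matrix.diagonal fun j => ((|lam j| : ℝ) : ℂ))
      = (Matrix.diagonal fun j => ((lam j : ℝ) : ℂ))
        * (Matrix.diagonal fun j => ((lam j : ℝ) : ℂ)) := by
    rw [Matrix.diagonal_mul_diagonal, Matrix.diagonal_mul_diagonal]
    have : (fun i => ((|lam i| : ℝ) : ℂ) * ((|lam i| : ℝ) : ℂ))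
        = fun i => ((lam i : ℝ) : ℂ) * ((lam i : ℝ) : ℂ) := by
      funext i
      rw [← Complex.ofReal_mul, ← Complex.ofReal_mul, abs_mul_abs_self]
    rw [this]
  have hBsq : B ^ 2 = Zᴴ * Z := by
    have hstep : (Matrix.diagonal fun j => ((|lam j| : ℝ) : ℂ))
        * ((Matrix.diagonal fun j => ((|lam j| : ℝ) : ℂ)) * Wᴴ)
        = (Matrix.diagonal fun j => ((lam j : ℝ) : ℂ))
          * ((Matrix.diagonal fun j => ((lam j : ℝ) : ℂ)) * Wᴴ) := by
      rw [← mul_assoc, ← mul_assoc, habs2]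
    rw [pow_two, hB, hHHmul, hHspec]
    simp only [mul_assoc]
    rw [hWW, hWW, hstep]
  have hsqrt := cfc_sqrt_eq' (Matrix.posSemidef_conjTranspose_mul_self Z) hBpsd hBsq
  have htn : traceNorm Z = ∑ j, |lam j| := by
    rw [traceNorm, hsqrt, hB, Matrix.trace_mul_cycle, hW1, one_mul, trace_diagonal,
      ← Complex.ofReal_sum, Complex.ofReal_re]
  -- the unitary U
  set s : Fin n → ℂ := fun i => if lam i < 0 then -1 else 1 with hs
  have hss : ∀ i, s i * s i = 1 := fun i => by
    by_cases h : lam i < 0 <;> simp [hs, h]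
  have hsstar : star s = s := by
    funext i
    by_cases h : lam i < 0 <;> simp [hs, h]
  set U : Matrix (Fin n) (Fin n) ℂ := W * Matrix.diagonal s * Wᴴ with hU
  have hUct : Uᴴ = U := by
    rw [hU, conjTranspose_mul, conjTranspose_mul, conjTranspose_conjTranspose,
      Matrix.diagonal_conjTranspose, hsstar, ← mul_assoc]
  have hU1 : Uᴴ * U = 1 := by
    rw [hUct, hU]
    simp only [mul_assoc]
    rw [hWW, ← mul_assoc (Matrix.diagonal s), Matrix.diagonal_mul_diagonal]
    have : (Matrix.diagonal fun i => s i * s i) = (1 : Matrix (Fin n) (Fin n) ℂ) := by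
      rw [show (fun i => s i * s i) = fun _ => (1 : ℂ) from funext hss, Matrix.diagonal_one]
    rw [this, one_mul, hW2]
  have hU2 : U * Uᴴ = 1 := by rw [hUct] at hU1 ⊢; exact hU1
  -- trace of U * H
  have htrUH : (U * H).trace = ((∑ j, |lam j| : ℝ) : ℂ) := by
    rw [hU, hHspec]
    simp only [mul_assoc]
    rw [hWW]
    rw [← mul_assoc (Matrix.diagonal s), Matrix.diagonal_mul_diagonal]
    rw [← mul_assoc W, Matrix.trace_mul_cycle, hW1, one_mul, trace_diagonal]
    push_cast
    refine Finset.sum_congr rfl fun i _ => ?_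
    by_cases h : lam i < 0
    · simp [hs, h, abs_of_neg h]
    · simp [hs, h, _root_.abs_of_nonneg (not_lt.mp h)]
  -- relate to trace of X * (Y*U - U*Y)
  have htrZ : (U * H).trace = Complex.I * (X * (Y * U - U * Y)).trace := by
    rw [hH, Matrix.mul_smul, Matrix.trace_smul, smul_eq_mul]
    congr 1
    rw [hZ, mul_sub, Matrix.trace_sub, mul_sub, Matrix.trace_sub]
    congr 1
    · rw [Matrix.trace_mul_comm U (X * Y), mul_assoc]
    · rw [← mul_assoc, Matrix.trace_mul_comm (U * Y) X, ← mul_assoc]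
  set T : ℂ := (X * (Y * U - U * Y)).trace with hT
  have key : ∑ j, |lam j| ≤ ‖T‖ := by
    have h1 : ((∑ j, |lam j| : ℝ) : ℂ) = Complex.I * T := by rw [← htrUH, htrZ]
    have h2 : (∑ j, |lam j| : ℝ) = (Complex.I * T).re := by
       rw [← h1]; simp
    rw [h2, Complex.mul_re]
    simp only [Complex.I_re, Complex.I_im, zero_mul, one_mul, zero_sub]
    calc -T.im ≤ |T.im| := neg_le_abs _
      _ ≤ ‖T‖ := Complex.abs_im_le_norm T
  rw [htn]
  exact key.trans (trace_commut_bound hX hY hU1 hU2)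
end

section
/- Let H be a real or complex inner product space, let K ≥ 2, and let x_1, …, x_K ∈ H. Then ‖∑_{j=1}^K x_j‖ + (K−2) ∑_{j=1}^K ‖x_j‖ ≥ ∑_{1 ≤ j < k ≤ K} ‖x_j + x_k‖ (Adamovic's generalisation of Hlawka's inequality). -/
open Finset

/-- Sum over strictly increasing pairs of a symmetric function. -/
lemma pair_sum_eq {K : ℕ} (g : Fin K → Fin K → ℝ) (hg : ∀ j k, g j k = g k j) :
    2 * ∑ p ∈ Finset.univ.filter (fun p : Fin K × Fin K => p.1 < p.2), g p.1 p.2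
      = (∑ j, ∑ k, g j k) - ∑ j, g j j := by
  classical
  have htot : ∑ j, ∑ k, g j k = ∑ p : Fin K × Fin K, g p.1 p.2 := by
    rw [← Finset.sum_product']; rfl
  have hswap : ∑ p ∈ Finset.univ.filter (fun p : Fin K × Fin K => p.2 < p.1), g p.1 p.2
      = ∑ p ∈ Finset.univ.filter (fun p : Fin K × Fin K => p.1 < p.2), g p.1 p.2 := by
    refine Finset.sum_equiv (Equiv.prodComm (Fin K) (Fin K)) (fun p => by simp) ?_
    intro p hp
    exact hg p.1 p.2
  have hdisj : Disjoint (Finset.univ.filter (fun p : Fin K × Fin K => p.1 < p.2))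
      (Finset.univ.filter (fun p : Fin K × Fin K => p.2 < p.1)) := by
    rw [Finset.disjoint_left]
    intro p hp hp'
    simp only [Finset.mem_filter] at hp hp'
    exact absurd hp'.2 (not_lt.mpr hp.2.le)
  have hunion : Finset.univ.filter (fun p : Fin K × Fin K => p.1 < p.2)
      ∪ Finset.univ.filter (fun p : Fin K × Fin K => p.2 < p.1)
      = Finset.univ.filter (fun p : Fin K × Fin K => p.1 ≠ p.2) := by
    rw [← Finset.filter_or]
    apply Finset.filter_congr
    intro p _
    constructor
    · rintro (h | h) <;> [exact h.ne; exact h.ne']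
    · intro h; exact lt_or_gt_of_ne h
  have hdiag : ∑ p ∈ Finset.univ.filter (fun p : Fin K × Fin K => p.1 = p.2), g p.1 p.2
      = ∑ j, g j j := by
    refine Finset.sum_nbij' (fun p => p.1) (fun j => (j, j)) ?_ ?_ ?_ ?_ ?_
    · intro a _; exact Finset.mem_univ _
    · intro a _; simp
    · intro a ha; simp only [Finset.mem_filter] at ha
      exact Prod.ext rfl ha.2
    · intro a _; rfl
    · intro a ha; simp only [Finset.mem_filter] at ha
      simp only [ha.2]
  have hfc : Finset.univ.filter (fun p : Fin K × Fin K => ¬ p.1 ≠ p.2)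
      = Finset.univ.filter (fun p : Fin K × Fin K => p.1 = p.2) := by
    apply Finset.filter_congr; intro p _; simp
  have hsplit : ∑ p : Fin K × Fin K, g p.1 p.2
      = (∑ p ∈ Finset.univ.filter (fun p : Fin K × Fin K => p.1 ≠ p.2), g p.1 p.2)
      + ∑ j, g j j := by
    rw [← Finset.sum_filter_add_sum_filter_not Finset.univ
      (fun p : Fin K × Fin K => p.1 ≠ p.2) (fun p => g p.1 p.2), hfc, hdiag]
  rw [two_mul]
  nth_rewrite 2 [← hswap]
  rw [← Finset.sum_union hdisj, hunion, htot, hsplit]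
  ring

/-- **Adamovic's generalisation of Hlawka's inequality**: in a real or complex inner product
space, for `K ≥ 2` vectors `x₁, …, x_K`,
`‖∑ⱼ xⱼ‖ + (K−2) ∑ⱼ ‖xⱼ‖ ≥ ∑_{j<k} ‖xⱼ + x_k‖`. -/
theorem adamovic_inequality
    {𝕜 : Type*} [RCLike 𝕜] {E : Type*} [NormedAddCommGroup E] [InnerProductSpace 𝕜 E]
    (K : ℕ) (hK : 2 ≤ K) (x : Fin K → E) :
    ∑ p ∈ Finset.univ.filter (fun p : Fin K × Fin K => p.1 < p.2), ‖x p.1 + x p.2‖ ≤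
      ‖∑ j, x j‖ + ((K : ℝ) - 2) * ∑ j, ‖x j‖ := by
  classical
  set Φ := Finset.univ.filter (fun p : Fin K × Fin K => p.1 < p.2) with hΦ
  set T : ℝ := ∑ j, ‖x j‖ with hT
  set N : ℝ := ‖∑ j, x j‖ with hN
  set Q : ℝ := ∑ j, ‖x j‖ ^ 2 with hQ
  have hT0 : 0 ≤ T := Finset.sum_nonneg fun _ _ => norm_nonneg _
  have hN0 : 0 ≤ N := norm_nonneg _
  -- basic double-sum computations
  have e1 : ∀ f : Fin K → ℝ, ∑ _j : Fin K, f _j * (K : ℝ) = (K : ℝ) * ∑ j, f j := by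
    intro f; rw [← Finset.sum_mul]; ring
  have ec : ∀ c : ℝ, ∑ _j : Fin K, c = (K : ℝ) * c := by
    intro c; rw [Finset.sum_const, Finset.card_univ, Fintype.card_fin, nsmul_eq_mul]
  -- inner product expansion of N²
  have hr : ∑ j, ∑ k, (RCLike.re (inner 𝕜 (x j) (x k) : 𝕜)) = N ^ 2 := by
    rw [hN, ← inner_self_eq_norm_sq (𝕜 := 𝕜), sum_inner]
    rw [map_sum]
    refine Finset.sum_congr rfl fun j _ => ?_
    rw [inner_sum, map_sum]
  have hsum1 : ∀ f : Fin K → ℝ, ∑ j : Fin K, ∑ _k : Fin K, f j = (K : ℝ) * ∑ j, f j := by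
    intro f
    simp_rw [Finset.sum_const, Finset.card_univ, Fintype.card_fin, nsmul_eq_mul]
    rw [← Finset.mul_sum]
  have hsum2 : ∀ f : Fin K → ℝ, ∑ _j : Fin K, ∑ k : Fin K, f k = (K : ℝ) * ∑ j, f j := by
    intro f
    rw [Finset.sum_const, Finset.card_univ, Fintype.card_fin, nsmul_eq_mul]
  -- sum of ‖x j + x k‖² over pairs
  have hsq : ∑ p ∈ Φ, ‖x p.1 + x p.2‖ ^ 2 = ((K : ℝ) - 2) * Q + N ^ 2 := by
    have key := pair_sum_eq (fun j k => ‖x j + x k‖ ^ 2)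
      (fun j k => by show ‖x j + x k‖ ^ 2 = ‖x k + x j‖ ^ 2; rw [add_comm])
    have hmid : ∑ j : Fin K, ∑ k : Fin K, 2 * (RCLike.re (inner 𝕜 (x j) (x k) : 𝕜))
        = 2 * N ^ 2 := by
      simp_rw [← Finset.mul_sum]
      rw [hr]
    have h1 : ∑ j : Fin K, ∑ k : Fin K, ‖x j + x k‖ ^ 2 = 2 * (K : ℝ) * Q + 2 * N ^ 2 := by
      calc ∑ j : Fin K, ∑ k : Fin K, ‖x j + x k‖ ^ 2
          = ∑ j : Fin K, ∑ k : Fin K,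
              (‖x j‖ ^ 2 + 2 * (RCLike.re (inner 𝕜 (x j) (x k) : 𝕜)) + ‖x k‖ ^ 2) := by
            simp_rw [norm_add_sq (𝕜 := 𝕜)]
        _ = (∑ j : Fin K, ∑ _k : Fin K, ‖x j‖ ^ 2)
            + (∑ j : Fin K, ∑ k : Fin K, 2 * (RCLike.re (inner 𝕜 (x j) (x k) : 𝕜)))
            + ∑ _j : Fin K, ∑ k : Fin K, ‖x k‖ ^ 2 := by
            simp_rw [Finset.sum_add_distrib]
        _ = (K : ℝ) * Q + 2 * N ^ 2 + (K : ℝ) * Q := by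
            rw [hsum1, hsum2, hmid, ← hQ]
        _ = 2 * (K : ℝ) * Q + 2 * N ^ 2 := by ring
    have h2 : ∑ j : Fin K, ‖x j + x j‖ ^ 2 = 4 * Q := by
      have hd : ∀ j : Fin K, ‖x j + x j‖ ^ 2 = 4 * ‖x j‖ ^ 2 := by
        intro j
        rw [norm_add_sq (𝕜 := 𝕜), inner_self_eq_norm_sq]
        ring
      simp_rw [hd]
      rw [← Finset.mul_sum, ← hQ]
    rw [h1, h2] at key
    rw [hΦ]; linarith [key]
  -- sum of ‖x j‖ + ‖x k‖ over pairs
  have hb : ∑ p ∈ Φ, (‖x p.1‖ + ‖x p.2‖) = ((K : ℝ) - 1) * T := by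
    have key := pair_sum_eq (fun j k => ‖x j‖ + ‖x k‖)
      (fun j k => by show ‖x j‖ + ‖x k‖ = ‖x k‖ + ‖x j‖; ring)
    have h1 : ∑ j : Fin K, ∑ k : Fin K, (‖x j‖ + ‖x k‖) = 2 * (K : ℝ) * T := by
      calc ∑ j : Fin K, ∑ k : Fin K, (‖x j‖ + ‖x k‖)
          = (∑ j : Fin K, ∑ _k : Fin K, ‖x j‖) + ∑ _j : Fin K, ∑ k : Fin K, ‖x k‖ := by
            simp_rw [Finset.sum_add_distrib]
        _ = (K : ℝ) * T + (K : ℝ) * T := by rw [hsum1, hsum2, ← hT]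
        _ = 2 * (K : ℝ) * T := by ring
    have h2 : ∑ j : Fin K, (‖x j‖ + ‖x j‖) = 2 * T := by
      rw [Finset.sum_add_distrib, ← hT]; ring
    rw [h1, h2] at key
    rw [hΦ]; linarith [key]
  -- sum of (‖x j‖ + ‖x k‖)² over pairs
  have hb2 : ∑ p ∈ Φ, (‖x p.1‖ + ‖x p.2‖) ^ 2 = ((K : ℝ) - 2) * Q + T ^ 2 := by
    have key := pair_sum_eq (fun j k => (‖x j‖ + ‖x k‖) ^ 2)
      (fun j k => by show (‖x j‖ + ‖x k‖) ^ 2 = (‖x k‖ + ‖x j‖) ^ 2; ring)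
    have hTT : ∑ j : Fin K, ∑ k : Fin K, 2 * ‖x j‖ * ‖x k‖ = 2 * T ^ 2 := by
      simp_rw [mul_assoc, ← Finset.mul_sum]
      rw [← Finset.sum_mul, ← hT]
      ring
    have h1 : ∑ j : Fin K, ∑ k : Fin K, (‖x j‖ + ‖x k‖) ^ 2
        = 2 * (K : ℝ) * Q + 2 * T ^ 2 := by
      calc ∑ j : Fin K, ∑ k : Fin K, (‖x j‖ + ‖x k‖) ^ 2
          = ∑ j : Fin K, ∑ k : Fin K,
              (‖x j‖ ^ 2 + 2 * ‖x j‖ * ‖x k‖ + ‖x k‖ ^ 2) := by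
            simp_rw [add_sq]
        _ = (∑ j : Fin K, ∑ _k : Fin K, ‖x j‖ ^ 2)
            + (∑ j : Fin K, ∑ k : Fin K, 2 * ‖x j‖ * ‖x k‖)
            + ∑ _j : Fin K, ∑ k : Fin K, ‖x k‖ ^ 2 := by
            simp_rw [Finset.sum_add_distrib]
        _ = (K : ℝ) * Q + 2 * T ^ 2 + (K : ℝ) * Q := by
            rw [hsum1, hsum2, hTT, ← hQ]
        _ = 2 * (K : ℝ) * Q + 2 * T ^ 2 := by ring
    have h2 : ∑ j : Fin K, (‖x j‖ + ‖x j‖) ^ 2 = 4 * Q := by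
      have hd : ∀ j : Fin K, (‖x j‖ + ‖x j‖) ^ 2 = 4 * ‖x j‖ ^ 2 := fun j => by ring
      simp_rw [hd]
      rw [← Finset.mul_sum, ← hQ]
    rw [h1, h2] at key
    rw [hΦ]; linarith [key]
  -- pointwise bounds
  have hab : ∀ p ∈ Φ, ‖x p.1 + x p.2‖ ≤ ‖x p.1‖ + ‖x p.2‖ := fun p _ => norm_add_le _ _
  have hac : ∀ p ∈ Φ, ‖x p.1 + x p.2‖ ≤ N + T - (‖x p.1‖ + ‖x p.2‖) := by
    intro p hp
    have hne : p.1 ≠ p.2 := by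
      rw [hΦ, Finset.mem_filter] at hp
      exact hp.2.ne
    have hsub : ({p.1, p.2} : Finset (Fin K)) ⊆ Finset.univ := Finset.subset_univ _
    have hpairx : ∑ j ∈ ({p.1, p.2} : Finset (Fin K)), x j = x p.1 + x p.2 :=
      Finset.sum_pair hne
    have hpairn : ∑ j ∈ ({p.1, p.2} : Finset (Fin K)), ‖x j‖ = ‖x p.1‖ + ‖x p.2‖ :=
      Finset.sum_pair hne
    have hx : x p.1 + x p.2 = (∑ j, x j) - ∑ j ∈ Finset.univ \ {p.1, p.2}, x j := by
      rw [← hpairx, eq_sub_iff_add_eq, add_comm, Finset.sum_sdiff hsub]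
    have hnrm : ∑ j ∈ Finset.univ \ {p.1, p.2}, ‖x j‖ = T - (‖x p.1‖ + ‖x p.2‖) := by
      rw [← hpairn, eq_sub_iff_add_eq, Finset.sum_sdiff hsub, hT]
    calc ‖x p.1 + x p.2‖ = ‖(∑ j, x j) - ∑ j ∈ Finset.univ \ {p.1, p.2}, x j‖ := by rw [← hx]
      _ ≤ ‖∑ j, x j‖ + ‖∑ j ∈ Finset.univ \ {p.1, p.2}, x j‖ := norm_sub_le _ _
      _ ≤ N + ∑ j ∈ Finset.univ \ {p.1, p.2}, ‖x j‖ := by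
          gcongr; exacts [norm_sum_le _ _]
      _ = N + T - (‖x p.1‖ + ‖x p.2‖) := by rw [hnrm]; ring
  -- key summed inequality
  have hkey : (∑ p ∈ Φ, ‖x p.1 + x p.2‖) * (T + N)
      ≤ ((K : ℝ) - 2) * Q + N ^ 2
        + (((K : ℝ) - 1) * T * (N + T) - (((K : ℝ) - 2) * Q + T ^ 2)) := by
    have hpt : ∀ p ∈ Φ, ‖x p.1 + x p.2‖ * (T + N)
        ≤ ‖x p.1 + x p.2‖ ^ 2
          + ((‖x p.1‖ + ‖x p.2‖) * (N + T) - (‖x p.1‖ + ‖x p.2‖) ^ 2) := by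
      intro p hp
      have h1 := hab p hp
      have h2 := hac p hp
      have h0 : 0 ≤ ‖x p.1 + x p.2‖ := norm_nonneg _
      nlinarith [mul_nonneg (sub_nonneg.mpr h1) (sub_nonneg.mpr h2)]
    calc (∑ p ∈ Φ, ‖x p.1 + x p.2‖) * (T + N)
        = ∑ p ∈ Φ, ‖x p.1 + x p.2‖ * (T + N) := by rw [Finset.sum_mul]
      _ ≤ ∑ p ∈ Φ, (‖x p.1 + x p.2‖ ^ 2
            + ((‖x p.1‖ + ‖x p.2‖) * (N + T) - (‖x p.1‖ + ‖x p.2‖) ^ 2)) :=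
          Finset.sum_le_sum hpt
      _ = (∑ p ∈ Φ, ‖x p.1 + x p.2‖ ^ 2)
            + ((∑ p ∈ Φ, (‖x p.1‖ + ‖x p.2‖)) * (N + T)
              - ∑ p ∈ Φ, (‖x p.1‖ + ‖x p.2‖) ^ 2) := by
          rw [Finset.sum_add_distrib, Finset.sum_sub_distrib, Finset.sum_mul]
      _ = _ := by rw [hsq, hb, hb2]
  -- conclude
  rcases eq_or_lt_of_le (add_nonneg hT0 hN0) with h0 | hpos
  · -- T + N = 0, so everything vanishes
    have hT' : T = 0 := by linarith [hN0, hT0, h0.symm.le]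
    have hN' : N = 0 := by linarith [hN0, hT0, h0.symm.le]
    have hs : ∑ j, ‖x j‖ = 0 := by rw [← hT]; exact hT'
    have hzero : ∀ j : Fin K, ‖x j‖ = 0 := fun j =>
      (Finset.sum_eq_zero_iff_of_nonneg (fun i _ => norm_nonneg (x i))).mp hs j
        (Finset.mem_univ j)
    have hP0 : ∑ p ∈ Φ, ‖x p.1 + x p.2‖ = 0 := by
      apply Finset.sum_eq_zero
      intro p _
      have hle := norm_add_le (x p.1) (x p.2)
      have h0' : 0 ≤ ‖x p.1 + x p.2‖ := norm_nonneg _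
      rw [hzero p.1, hzero p.2] at hle
      linarith
    calc ∑ p ∈ Φ, ‖x p.1 + x p.2‖ = 0 := hP0
      _ ≤ N + ((K : ℝ) - 2) * T := by rw [hN', hT']; norm_num
  · have hexp : ((K : ℝ) - 2) * Q + N ^ 2
        + (((K : ℝ) - 1) * T * (N + T) - (((K : ℝ) - 2) * Q + T ^ 2))
        = (N + ((K : ℝ) - 2) * T) * (T + N) := by ring
    rw [hexp] at hkey
    exact le_of_mul_le_mul_right hkey hpos
end

section
/- Let n ≥ 2, let λ_1, …, λ_n be complex numbers, and let p(z) = ∏_{i=1}^n (z − λ_i). Let I be the (n−1)×(n−1) identity matrix and J the (n−1)×(n−1) all-ones matrix, and define the D-companion matrix M = diag(λ_1, …, λ_{n−1})·(I − J/n) + λ_n·(J/n). Then the characteristic polynomial of M equals p′(z)/n; equivalently, the multiset of eigenvalues of M (with multiplicity) is exactly the multiset of roots of the derivative p′ (with multiplicity). -/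
/-- The `(n−1) × (n−1)` all-ones matrix. -/
def allOnesMatrix (k : ℕ) : Matrix (Fin k) (Fin k) ℂ :=
  Matrix.of fun _ _ => 1

/-- The D-companion matrix `diag(λ₁, …, λ_{n−1}) (I − J/n) + λ_n (J/n)` of Cheung and Ng,
associated to the roots `λ₁, …, λ_n` of a monic polynomial of degree `n`. -/
noncomputable def dCompanion (n : ℕ) (hn : 2 ≤ n) (lam : Fin n → ℂ) :
    Matrix (Fin (n - 1)) (Fin (n - 1)) ℂ :=
  Matrix.diagonal (fun i : Fin (n - 1) => lam ⟨i, by have := i.isLt; omega⟩) *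
      (1 - (n : ℂ)⁻¹ • allOnesMatrix (n - 1)) +
    lam ⟨n - 1, by omega⟩ • ((n : ℂ)⁻¹ • allOnesMatrix (n - 1))

open Polynomial Matrix Finset in
lemma eval_charpoly_aux {k : ℕ} (M : Matrix (Fin k) (Fin k) ℂ) (r : ℂ) :
    M.charpoly.eval r =
      (Matrix.of (fun i j => (if i = j then r else 0) - M i j)).det := by
  rw [Matrix.charpoly, ← Polynomial.coe_evalRingHom, RingHom.map_det]
  congr 1
  ext i j
  by_cases h : i = j
  · subst h
    simp [Matrix.charmatrix_apply_eq]
  · simp [Matrix.charmatrix_apply_ne _ _ _ h, h]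

open Polynomial Finset in
lemma derivative_finset_prod {ι : Type*} [DecidableEq ι] (s : Finset ι) (f : ι → ℂ[X]) :
    derivative (∏ i ∈ s, f i) =
      ∑ i ∈ s, (∏ j ∈ s.erase i, f j) * derivative (f i) := by
  classical
  induction s using Finset.induction_on with
  | empty => simp
  | insert a s ha ih =>
    rw [Finset.prod_insert ha, derivative_mul, ih, Finset.sum_insert ha,
      Finset.erase_insert ha, Finset.mul_sum]
    congr 1
    · rw [mul_comm]
    · apply Finset.sum_congr rfl
      intro i hi
      have hai : a ≠ i := fun h => ha (h ▸ hi)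
      rw [Finset.erase_insert_of_ne hai, Finset.prod_insert
        (fun h => ha (Finset.mem_of_mem_erase h))]
      ring

/-- **Cheung–Ng D-companion matrix theorem.**  The characteristic polynomial of the
D-companion matrix of `p(z) = ∏ᵢ (z − λᵢ)` equals `p′(z)/n`; equivalently the eigenvalues
of the D-companion matrix (with multiplicity) are exactly the roots of `p′`. -/
theorem dCompanion_charpoly (n : ℕ) (hn : 2 ≤ n) (lam : Fin n → ℂ) :
    (dCompanion n hn lam).charpoly =
      Polynomial.C ((n : ℂ)⁻¹) *
        Polynomial.derivative (∏ i, (Polynomial.X - Polynomial.C (lam i))) := by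
  classical
  obtain ⟨m, rfl⟩ : ∃ m, n = m + 1 := ⟨n - 1, by omega⟩
  have hm : 1 ≤ m := by omega
  apply Polynomial.eq_of_infinite_eval_eq
  refine ((Set.finite_range lam).infinite_compl).mono ?_
  intro r hr
  simp only [Set.mem_compl_iff, Set.mem_range, not_exists] at hr
  have hne : ∀ j : Fin (m + 1), r - lam j ≠ 0 := fun j h => hr j (sub_eq_zero.mp h).symm
  show Polynomial.eval r _ = Polynomial.eval r _
  set D : Fin m → ℂ := fun i => lam i.castSucc with hD
  set μ : ℂ := lam (Fin.last m) with hμ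
  set c : ℂ := ((m + 1 : ℕ) : ℂ)⁻¹ with hc
  have hm1 : ((m : ℂ) + 1) ≠ 0 := Nat.cast_add_one_ne_zero m
  have hc1 : ((m : ℂ) + 1) * c = 1 := by
    rw [hc]
    push_cast
    exact mul_inv_cancel₀ hm1
  have hDne : ∀ i : Fin m, r - D i ≠ 0 := fun i => hne i.castSucc
  set G : ℂ := ∏ i : Fin m, (r - D i) with hG
  set F : ℂ := ∏ j : Fin (m + 1), (r - lam j) with hF
  have hFG : F = G * (r - μ) := by
    rw [hF, Fin.prod_univ_castSucc]
  -- RHS evaluation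
  have hQ : ∀ j : Fin (m + 1),
      (∏ k ∈ Finset.univ.erase j, (r - lam k)) = F * (r - lam j)⁻¹ := by
    intro j
    have h1 : (r - lam j) * ∏ k ∈ Finset.univ.erase j, (r - lam k) = F := by
      rw [hF]
      exact Finset.mul_prod_erase Finset.univ (fun k => r - lam k) (Finset.mem_univ j)
    rw [← h1, mul_comm (r - lam j), mul_assoc, mul_inv_cancel₀ (hne j), mul_one]
  have hRHS : Polynomial.eval r (Polynomial.C ((((m + 1 : ℕ)) : ℂ)⁻¹) *
        Polynomial.derivative (∏ i, (Polynomial.X - Polynomial.C (lam i)))) =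
      c * (∑ j : Fin (m + 1), F * (r - lam j)⁻¹) := by
    rw [derivative_finset_prod]
    simp only [Polynomial.derivative_sub, Polynomial.derivative_X, Polynomial.derivative_C,
      sub_zero, mul_one, Polynomial.eval_mul, Polynomial.eval_C, Polynomial.eval_finset_sum]
    congr 1
    refine Finset.sum_congr rfl fun j _ => ?_
    rw [← hQ j]
    simp [Polynomial.eval_prod]
  -- LHS evaluation: the determinant computation
  set u : Fin m → ℂ := fun i => c * (D i - μ) with hu
  set A : Matrix (Fin m) (Fin m) ℂ := Matrix.diagonal (fun i => r - D i) with hA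
  have hdetA : A.det = G := by rw [hA, Matrix.det_diagonal, hG]
  have hAunit : IsUnit A.det := by
    rw [hdetA, isUnit_iff_ne_zero, hG]
    exact Finset.prod_ne_zero_iff.mpr fun i _ => hDne i
  have hcr : ∀ (i j : Fin m),
      (Matrix.replicateCol Unit u * Matrix.replicateRow Unit (fun _ => (1 : ℂ))) i j = u i := by
    intro i j
    simp [Matrix.mul_apply]
  have hmat : (Matrix.of (fun i j => (if i = j then r else 0) - dCompanion (m + 1) hn lam i j)) =
      A + Matrix.replicateCol Unit u * Matrix.replicateRow Unit (fun _ => (1 : ℂ)) := by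
    ext i j
    rw [Matrix.of_apply, Matrix.add_apply, hcr]
    have hcast : (lam ⟨(i : ℕ), by omega⟩ : ℂ) = D i := by
      rw [hD]; rfl
    have hlast : (lam ⟨m + 1 - 1, by omega⟩ : ℂ) = μ := by
      rw [hμ]; rfl
    simp only [dCompanion, Matrix.add_apply, Matrix.smul_apply, allOnesMatrix,
      Matrix.of_apply, smul_eq_mul, Matrix.diagonal_mul, Matrix.sub_apply,
      Matrix.one_apply, hA, Matrix.diagonal_apply, hu, hc, hcast, hlast]
    by_cases h : i = j <;> simp [h] <;> push_cast <;> ring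
  have hAinv : A⁻¹ = Matrix.diagonal (fun i => (r - D i)⁻¹) := by
    apply Matrix.inv_eq_right_inv
    rw [hA, Matrix.diagonal_mul_diagonal]
    have : (fun i => (r - D i) * (r - D i)⁻¹) = fun _ : Fin m => (1 : ℂ) := by
      funext i
      exact mul_inv_cancel₀ (hDne i)
    rw [this, Matrix.diagonal_one]
  have hLHS : Polynomial.eval r (dCompanion (m + 1) hn lam).charpoly =
      G * (1 + ∑ i : Fin m, (r - D i)⁻¹ * u i) := by
    rw [eval_charpoly_aux, hmat, Matrix.det_add_replicateCol_mul_replicateRow hAunit, hdetA]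
    congr 1
    rw [Matrix.det_unique, hAinv]
    simp [Matrix.mul_apply, Matrix.diagonal_apply, Finset.sum_ite_eq, mul_comm]
  rw [hLHS, hRHS]
  -- the scalar identity
  have key : ∀ i : Fin m, G * ((r - D i)⁻¹ * u i) = c * (F * (r - D i)⁻¹) - c * G := by
    intro i
    have hx := hDne i
    rw [hu, hFG]
    field_simp
    ring
  rw [mul_add, mul_one, Finset.mul_sum]
  rw [Finset.sum_congr rfl fun i _ => key i, Finset.sum_sub_distrib, Finset.sum_const,
    Finset.card_univ, Fintype.card_fin, Fin.sum_univ_castSucc]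
  have hlastterm : F * (r - lam (Fin.last m))⁻¹ = G := by
    rw [hFG, ← hμ, mul_assoc, mul_inv_cancel₀ (hne (Fin.last m)), mul_one]
  rw [hlastterm]
  have : ∑ i : Fin m, c * (F * (r - lam i.castSucc)⁻¹) =
      ∑ i : Fin m, c * (F * (r - D i)⁻¹) := rfl
  rw [mul_add, this, Finset.mul_sum]
  simp only [nsmul_eq_mul]
  linear_combination (-G) * hc1
end
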